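/- If ‖I - QᵀQ‖₂ ≤ ω with 0 ≤ ω < 1, then for every matrix U of compatible dimensions, ‖Uᵀ Q Qᵀ (I - Q Qᵀ) U‖₂ ≤ 2ω ‖U‖₂². -/

import Mathlib

open Matrix

/-- Spectral norm (largest singular value) of a real matrix. -/
noncomputable def sn {m n : ℕ} (A : Matrix (Fin m) (Fin n) ℝ) : ℝ :=
  sSup {c | ∃ x : EuclideanSpace ℝ (Fin n), ‖x‖ = 1 ∧
    c = ‖(WithLp.equiv 2 (Fin m → ℝ)).symm (A.mulVec ((WithLp.equiv 2 (Fin n → ℝ)) x))‖}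

/-- Smallest singular value of a real matrix. -/
noncomputable def smin {m n : ℕ} (A : Matrix (Fin m) (Fin n) ℝ) : ℝ :=
  sInf {c | ∃ x : EuclideanSpace ℝ (Fin n), ‖x‖ = 1 ∧
    c = ‖(WithLp.equiv 2 (Fin m → ℝ)).symm (A.mulVec ((WithLp.equiv 2 (Fin n → ℝ)) x))‖}

/-- Smallest eigenvalue (Rayleigh quotient infimum) of a square real matrix. -/
noncomputable def lmin {n : ℕ} (A : Matrix (Fin n) (Fin n) ℝ) : ℝ :=
  sInf {c | ∃ x : EuclideanSpace ℝ (Fin n), ‖x‖ = 1 ∧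
    c = (inner ℝ x ((WithLp.equiv 2 (Fin n → ℝ)).symm (A.mulVec ((WithLp.equiv 2 (Fin n → ℝ)) x))) : ℝ)}

noncomputable def clm {m n : ℕ} (A : Matrix (Fin m) (Fin n) ℝ) :
    EuclideanSpace ℝ (Fin n) →L[ℝ] EuclideanSpace ℝ (Fin m) :=
  LinearMap.toContinuousLinearMap (Matrix.toEuclideanLin A)

lemma clm_apply {m n : ℕ} (A : Matrix (Fin m) (Fin n) ℝ) (x : EuclideanSpace ℝ (Fin n)) :
    clm A x = (WithLp.equiv 2 (Fin m → ℝ)).symm (A.mulVec ((WithLp.equiv 2 (Fin n → ℝ)) x)) := by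
  simp [clm, Matrix.toEuclideanLin_apply]

lemma clm_mul {m n p : ℕ} (A : Matrix (Fin m) (Fin n) ℝ) (B : Matrix (Fin n) (Fin p) ℝ) :
    clm (A * B) = (clm A).comp (clm B) := by
  ext x i
  simp [clm_apply, Matrix.mulVec_mulVec]

lemma clm_transpose {m n : ℕ} (A : Matrix (Fin m) (Fin n) ℝ) :
    clm Aᵀ = ContinuousLinearMap.adjoint (clm A) := by
  have h1 : Aᵀ = Aᴴ := by ext i j; simp [conjTranspose]
  rw [clm, h1, Matrix.toEuclideanLin_conjTranspose_eq_adjoint,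
    LinearMap.adjoint_toContinuousLinearMap]
  rfl

lemma clm_one {n : ℕ} : clm (1 : Matrix (Fin n) (Fin n) ℝ) = ContinuousLinearMap.id ℝ _ := by
  ext x i
  simp [clm_apply]

lemma clm_sub {m n : ℕ} (A B : Matrix (Fin m) (Fin n) ℝ) :
    clm (A - B) = clm A - clm B := by
  ext x i
  simp [clm_apply, Matrix.sub_mulVec]

lemma sn_eq {m n : ℕ} (A : Matrix (Fin m) (Fin n) ℝ) : sn A = ‖clm A‖ := by
  have hset : {c | ∃ x : EuclideanSpace ℝ (Fin n), ‖x‖ = 1 ∧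
      c = ‖(WithLp.equiv 2 (Fin m → ℝ)).symm (A.mulVec ((WithLp.equiv 2 (Fin n → ℝ)) x))‖}
      = {c | ∃ x : EuclideanSpace ℝ (Fin n), ‖x‖ = 1 ∧ c = ‖clm A x‖} := by
    simp [clm_apply]
  rw [sn, hset]
  rcases Nat.eq_zero_or_pos n with hn | hn
  · subst hn
    have hempty : {c | ∃ x : EuclideanSpace ℝ (Fin 0), ‖x‖ = 1 ∧ c = ‖clm A x‖} = ∅ := by
      ext c
      simp only [Set.mem_setOf_eq, Set.mem_empty_iff_false, iff_false, not_exists]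
      intro x hx
      have : x = 0 := Subsingleton.elim x 0
      rw [this] at hx
      simp at hx
    rw [hempty, Real.sSup_empty]
    symm
    rw [norm_eq_zero]
    ext x
    have : x = 0 := Subsingleton.elim x 0
    simp [this]
  · have hne : ∃ x : EuclideanSpace ℝ (Fin n), ‖x‖ = 1 := by
      refine ⟨EuclideanSpace.single ⟨0, hn⟩ 1, ?_⟩
      simp [EuclideanSpace.norm_single]
    obtain ⟨x₀, hx₀⟩ := hne
    have hbdd : ∀ c ∈ {c | ∃ x : EuclideanSpace ℝ (Fin n), ‖x‖ = 1 ∧ c = ‖clm A x‖},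
        c ≤ ‖clm A‖ := by
      rintro c ⟨x, hx, rfl⟩
      exact (clm A).unit_le_opNorm x hx.le
    refine le_antisymm (csSup_le ⟨_, ⟨x₀, hx₀, rfl⟩⟩ hbdd) ?_
    refine (clm A).opNorm_le_bound ?_ ?_
    · exact le_csSup ⟨‖clm A‖, hbdd⟩ ⟨x₀, hx₀, rfl⟩ |>.trans' (norm_nonneg _)
    · intro x
      rcases eq_or_ne x 0 with rfl | hx
      · simp
      · have hxn : ‖x‖ ≠ 0 := norm_ne_zero_iff.2 hx
        have hu : ‖(‖x‖⁻¹ • x : EuclideanSpace ℝ (Fin n))‖ = 1 := by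
          rw [norm_smul, norm_inv, norm_norm, inv_mul_cancel₀ hxn]
        have hmem : ‖clm A (‖x‖⁻¹ • x)‖ ∈
            {c | ∃ y : EuclideanSpace ℝ (Fin n), ‖y‖ = 1 ∧ c = ‖clm A y‖} := ⟨_, hu, rfl⟩
        have hle := le_csSup ⟨‖clm A‖, hbdd⟩ hmem
        have heq : ‖clm A (‖x‖⁻¹ • x)‖ = ‖x‖⁻¹ * ‖clm A x‖ := by
          rw [(clm A).map_smul, norm_smul, norm_inv, norm_norm]
        rw [heq] at hle
        calc ‖clm A x‖ = ‖x‖ * (‖x‖⁻¹ * ‖clm A x‖) := by field_simp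
        _ ≤ ‖x‖ * sSup _ := mul_le_mul_of_nonneg_left hle (norm_nonneg x)
        _ = _ := mul_comm _ _

lemma sn_nonneg {m n : ℕ} (A : Matrix (Fin m) (Fin n) ℝ) : 0 ≤ sn A := by
  rw [sn_eq]; exact norm_nonneg _

lemma sn_mul_le {m n p : ℕ} (A : Matrix (Fin m) (Fin n) ℝ) (B : Matrix (Fin n) (Fin p) ℝ) :
    sn (A * B) ≤ sn A * sn B := by
  rw [sn_eq, sn_eq, sn_eq, clm_mul]
  exact ContinuousLinearMap.opNorm_comp_le _ _

lemma sn_transpose {m n : ℕ} (A : Matrix (Fin m) (Fin n) ℝ) : sn Aᵀ = sn A := by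
  rw [sn_eq, sn_eq, clm_transpose]
  exact LinearIsometryEquiv.norm_map ContinuousLinearMap.adjoint (clm A)

lemma sn_transpose_mul_self {m n : ℕ} (A : Matrix (Fin m) (Fin n) ℝ) :
    sn (Aᵀ * A) = sn A * sn A := by
  rw [sn_eq, sn_eq, clm_mul, clm_transpose]
  exact ContinuousLinearMap.norm_adjoint_comp_self (clm A)

theorem cross_term_bound
    {m t s : ℕ} (Q : Matrix (Fin m) (Fin t) ℝ) (ω : ℝ)
    (hω0 : 0 ≤ ω) (hω1 : ω < 1)
    (h : sn ((1 : Matrix (Fin t) (Fin t) ℝ) - Qᵀ * Q) ≤ ω)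
    (U : Matrix (Fin m) (Fin s) ℝ) :
    sn (Uᵀ * Q * Qᵀ * ((1 : Matrix (Fin m) (Fin m) ℝ) - Q * Qᵀ) * U)
      ≤ 2 * ω * (sn U) ^ 2 := by
  set E : Matrix (Fin t) (Fin t) ℝ := (1 : Matrix (Fin t) (Fin t) ℝ) - Qᵀ * Q with hE
  have key : Uᵀ * Q * Qᵀ * ((1 : Matrix (Fin m) (Fin m) ℝ) - Q * Qᵀ) * U
      = Uᵀ * Q * (E * (Qᵀ * U)) := by
    simp only [hE, Matrix.mul_sub, Matrix.sub_mul, Matrix.mul_one, Matrix.one_mul,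
      Matrix.mul_assoc]
  have hQ2 : sn Q * sn Q ≤ 2 := by
    have h1 : Qᵀ * Q = 1 - E := by rw [hE, sub_sub_cancel]
    have h2 : sn (Qᵀ * Q) ≤ 1 + ω := by
      rw [h1]
      rw [sn_eq, clm_sub, clm_one]
      calc ‖ContinuousLinearMap.id ℝ _ - clm E‖
          ≤ ‖ContinuousLinearMap.id ℝ (EuclideanSpace ℝ (Fin t))‖ + ‖clm E‖ := norm_sub_le _ _
        _ ≤ 1 + ω := add_le_add ContinuousLinearMap.norm_id_le (by rw [← sn_eq]; exact h)
    rw [← sn_transpose_mul_self]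
    linarith
  have c1 : sn (Uᵀ * Q * (E * (Qᵀ * U))) ≤ sn (Uᵀ * Q) * (sn E * sn (Qᵀ * U)) := by
    calc sn (Uᵀ * Q * (E * (Qᵀ * U))) ≤ sn (Uᵀ * Q) * sn (E * (Qᵀ * U)) := sn_mul_le _ _
      _ ≤ sn (Uᵀ * Q) * (sn E * sn (Qᵀ * U)) :=
        mul_le_mul_of_nonneg_left (sn_mul_le _ _) (sn_nonneg _)
  have c2 : sn (Uᵀ * Q) ≤ sn U * sn Q := by
    calc sn (Uᵀ * Q) ≤ sn Uᵀ * sn Q := sn_mul_le _ _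
      _ = sn U * sn Q := by rw [sn_transpose]
  have c3 : sn (Qᵀ * U) ≤ sn Q * sn U := by
    calc sn (Qᵀ * U) ≤ sn Qᵀ * sn U := sn_mul_le _ _
      _ = sn Q * sn U := by rw [sn_transpose]
  have hU := sn_nonneg U
  have hQ := sn_nonneg Q
  have hEn := sn_nonneg E
  have hQU := sn_nonneg (Qᵀ * U)
  have hUQ := sn_nonneg (Uᵀ * Q)
  rw [key]
  have step : sn (Uᵀ * Q) * (sn E * sn (Qᵀ * U)) ≤ (sn U * sn Q) * (ω * (sn Q * sn U)) := by
    apply mul_le_mul c2 (mul_le_mul h c3 hQU hω0) (by positivity) (by positivity)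
  have final : sn U * sn Q * (ω * (sn Q * sn U)) ≤ 2 * ω * (sn U) ^ 2 := by
    nlinarith [mul_nonneg (mul_nonneg hω0 hU) hU, hQ2, mul_nonneg hU hQ]
  linarith [c1, step, final]
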